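/- Let X be an n-hyperconvex metric space for some integer n ≥ 3. Then the metric completion of X is n-hyperconvex as well. -/

import Mathlib

/-- A metric space `X` is `n`-hyperconvex if for every family of `n` closed balls
`B(x i, r i)` with `d(x i, x j) ≤ r i + r j`, the intersection is nonempty. -/
def IsNHyperconvex (X : Type*) [MetricSpace X] (n : ℕ) : Prop :=
  ∀ (x : Fin n → X) (r : Fin n → ℝ), (∀ i, 0 ≤ r i) →
    (∀ i j, dist (x i) (x j) ≤ r i + r j) →
    (⋂ i, Metric.closedBall (x i) (r i)).Nonempty

open UniformSpace Metric Filter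

section Aux

variable {X : Type*} [MetricSpace X] {n : ℕ}

lemma hyperconvex_approx (z : Completion X) {δ : ℝ} (hδ : 0 < δ) :
    ∃ y : X, dist z (y : Completion X) ≤ δ := by
  obtain ⟨y, hy⟩ := Metric.denseRange_iff.1 Completion.denseRange_coe z δ hδ
  exact ⟨y, hy.le⟩

/-- One anchored step: given the family `x i` with radii `r i + τ i` and an anchor
point `p` at distance at most `r i + τ i + t` from each `x i` with `i ≠ j`, there is
a point `q` at distance `≤ t + δ` from `p` lying `δ`-inside all balls except possibly
the `j`-th one. -/
lemma hyperconvex_step (h : IsNHyperconvex X n)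
    (x : Fin n → Completion X) (r : Fin n → ℝ)
    (hr : ∀ i, 0 ≤ r i) (hd : ∀ i j, dist (x i) (x j) ≤ r i + r j)
    (p : Completion X) (t : ℝ) (ht : 0 ≤ t) (τ : Fin n → ℝ) (hτ : ∀ i, 0 ≤ τ i)
    (j : Fin n) (hp : ∀ i, i ≠ j → dist p (x i) ≤ r i + τ i + t)
    {δ : ℝ} (hδ : 0 < δ) :
    ∃ q : Completion X, dist q p ≤ t + δ ∧
      ∀ i, i ≠ j → dist q (x i) ≤ r i + τ i + δ := by
  set δ' : ℝ := δ / 3 with hδ'def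
  have hδ' : 0 < δ' := by positivity
  set c : Fin n → Completion X := fun i => if i = j then p else x i with hc
  set base : Fin n → ℝ := fun i => if i = j then t else r i + τ i with hbase
  have hbase0 : ∀ i, 0 ≤ base i := by
    intro i
    by_cases hi : i = j <;> simp [hbase, hi]
    · exact ht
    · exact add_nonneg (hr i) (hτ i)
  have hcpair : ∀ i k, dist (c i) (c k) ≤ base i + base k := by
    intro i k
    by_cases hi : i = j <;> by_cases hk : k = j <;> simp [hc, hbase, hi, hk]
    · positivity
    · calc dist p (x k) ≤ r k + τ k + t := hp k hk
        _ = t + (r k + τ k) := by ring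
    · calc dist (x i) p = dist p (x i) := dist_comm _ _
        _ ≤ r i + τ i + t := hp i hi
    · calc dist (x i) (x k) ≤ r i + r k := hd i k
        _ ≤ r i + τ i + (r k + τ k) := by
            have := hτ i; have := hτ k; linarith
  -- approximate the centers inside X
  have happrox : ∀ i, ∃ y : X, dist (c i) (y : Completion X) ≤ δ' :=
    fun i => hyperconvex_approx (c i) hδ'
  choose y hy using happrox
  set R : Fin n → ℝ := fun i => base i + δ' with hR
  have hR0 : ∀ i, 0 ≤ R i := fun i => add_nonneg (hbase0 i) hδ'.le
  have hRpair : ∀ i k, dist (y i) (y k) ≤ R i + R k := by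
    intro i k
    have : dist ((y i : Completion X)) ((y k : Completion X)) ≤ R i + R k := by
      calc dist ((y i : Completion X)) ((y k : Completion X))
          ≤ dist ((y i : Completion X)) (c i) + dist (c i) (c k) +
            dist (c k) ((y k : Completion X)) := dist_triangle4 _ _ _ _
        _ ≤ δ' + (base i + base k) + δ' := by
            have h1 : dist ((y i : Completion X)) (c i) ≤ δ' := by
              rw [dist_comm]; exact hy i
            exact add_le_add (add_le_add h1 (hcpair i k)) (hy k)
        _ = R i + R k := by simp [hR]; ring
    rwa [Completion.dist_eq] at this
  obtain ⟨z, hz⟩ := h y R hR0 hRpair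
  rw [Set.mem_iInter] at hz
  have hz' : ∀ i, dist (z : Completion X) ((y i : Completion X)) ≤ R i := by
    intro i
    rw [Completion.dist_eq]
    exact (Metric.mem_closedBall.1 (hz i))
  have key : ∀ i, dist (z : Completion X) (c i) ≤ base i + δ := by
    intro i
    calc dist (z : Completion X) (c i)
        ≤ dist (z : Completion X) ((y i : Completion X)) +
          dist ((y i : Completion X)) (c i) := dist_triangle _ _ _
      _ ≤ R i + δ' := by
          have : dist ((y i : Completion X)) (c i) ≤ δ' := by rw [dist_comm]; exact hy i
          exact add_le_add (hz' i) this
      _ = base i + 2 * δ' := by simp [hR]; ring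
      _ ≤ base i + δ := by rw [hδ'def]; linarith
  refine ⟨(z : Completion X), ?_, ?_⟩
  · have := key j
    simpa [hc, hbase] using this
  · intro i hij
    have := key i
    simpa [hc, hbase, hij] using this

/-- The contraction macro-step: from a point with all slacks `≤ s`, produce a point
with all slacks `≤ (3/5)s`, moving at most `3s`. Requires `3 ≤ n`. -/
lemma hyperconvex_contract (h : IsNHyperconvex X n) (hn : 3 ≤ n)
    (x : Fin n → Completion X) (r : Fin n → ℝ)
    (hr : ∀ i, 0 ≤ r i) (hd : ∀ i j, dist (x i) (x j) ≤ r i + r j)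
    (p : Completion X) (s : ℝ) (hs : 0 < s)
    (hp : ∀ i, dist p (x i) ≤ r i + s) :
    ∃ q : Completion X, dist q p ≤ 3 * s ∧ ∀ i, dist q (x i) ≤ r i + (3/5) * s := by
  have h0 : 0 < n := by omega
  have h1 : 1 < n := by omega
  have h2 : 2 < n := by omega
  set a : Fin n := ⟨0, h0⟩
  set b : Fin n := ⟨1, h1⟩
  set c : Fin n := ⟨2, h2⟩
  have hab : a ≠ b := by simp [a, b, Fin.ext_iff]
  have hac : a ≠ c := by simp [a, c, Fin.ext_iff]
  have hbc : b ≠ c := by simp [b, c, Fin.ext_iff]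
  set δ : ℝ := s / 100 with hδdef
  have hδ : 0 < δ := by positivity
  -- Step 1: drop a, all targets 0, anchor radius s
  obtain ⟨p₁, hp₁d, hp₁⟩ := hyperconvex_step h x r hr hd p s hs.le (fun _ => 0)
    (fun _ => le_refl 0) a (fun i _ => by simpa using hp i) hδ
  have hp₁a : dist p₁ (x a) ≤ r a + 2 * s + δ := by
    calc dist p₁ (x a) ≤ dist p₁ p + dist p (x a) := dist_triangle _ _ _
      _ ≤ (s + δ) + (r a + s) := add_le_add hp₁d (hp a)
      _ = r a + 2 * s + δ := by ring
  -- Step 2: drop b, target a → (3/2)s, anchor radius s/2 + δ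
  obtain ⟨p₂, hp₂d, hp₂⟩ := hyperconvex_step h x r hr hd p₁ (s/2 + δ)
    (by positivity) (fun i => if i = a then 3/2 * s else 0)
    (fun i => by by_cases hi : i = a <;> simp [hi] <;> positivity) b
    (fun i hib => by
      by_cases hia : i = a
      · beta_reduce
        rw [if_pos hia, hia]
        calc dist p₁ (x a) ≤ r a + 2 * s + δ := hp₁a
          _ = r a + 3/2 * s + (s/2 + δ) := by ring
      · beta_reduce
        simp only [if_neg hia]
        calc dist p₁ (x i) ≤ r i + 0 + δ := hp₁ i hia
          _ ≤ r i + 0 + (s/2 + δ) := by linarith) hδ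
  have hp₂a : dist p₂ (x a) ≤ r a + 3/2 * s + δ := by
    have := hp₂ a hab
    simpa using this
  have hp₂rest : ∀ i, i ≠ a → i ≠ b → dist p₂ (x i) ≤ r i + δ := by
    intro i hia hib
    have := hp₂ i hib
    simpa [hia] using this
  have hp₂b : dist p₂ (x b) ≤ r b + s/2 + 3 * δ := by
    calc dist p₂ (x b) ≤ dist p₂ p₁ + dist p₁ (x b) := dist_triangle _ _ _
      _ ≤ (s/2 + δ + δ) + (r b + 0 + δ) := add_le_add hp₂d (hp₁ b (Ne.symm hab))
      _ = r b + s/2 + 3 * δ := by ring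
  -- Step 3: drop c, target a → s, anchor radius s/2 + 3δ
  obtain ⟨p₃, hp₃d, hp₃⟩ := hyperconvex_step h x r hr hd p₂ (s/2 + 3*δ)
    (by positivity) (fun i => if i = a then s else 0)
    (fun i => by by_cases hi : i = a <;> simp [hi] <;> positivity) c
    (fun i hic => by
      by_cases hia : i = a
      · beta_reduce
        rw [if_pos hia, hia]
        calc dist p₂ (x a) ≤ r a + 3/2 * s + δ := hp₂a
          _ ≤ r a + s + (s/2 + 3*δ) := by linarith
      · beta_reduce
        simp only [if_neg hia]
        by_cases hib : i = b
        · rw [hib]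
          calc dist p₂ (x b) ≤ r b + s/2 + 3 * δ := hp₂b
            _ = r b + 0 + (s/2 + 3*δ) := by ring
        · calc dist p₂ (x i) ≤ r i + δ := hp₂rest i hia hib
            _ ≤ r i + 0 + (s/2 + 3*δ) := by linarith) hδ
  have hp₃a : dist p₃ (x a) ≤ r a + s + δ := by
    have := hp₃ a hac
    simpa using this
  have hp₃rest : ∀ i, i ≠ a → i ≠ c → dist p₃ (x i) ≤ r i + δ := by
    intro i hia hic
    have := hp₃ i hic
    simpa [hia] using this
  have hp₃c : dist p₃ (x c) ≤ r c + s/2 + 5 * δ := by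
    calc dist p₃ (x c) ≤ dist p₃ p₂ + dist p₂ (x c) := dist_triangle _ _ _
      _ ≤ (s/2 + 3*δ + δ) + (r c + δ) := add_le_add hp₃d (hp₂rest c (Ne.symm hac) (Ne.symm hbc))
      _ = r c + s/2 + 5 * δ := by ring
  -- Step 4: drop b, target a → s/2, anchor radius s/2 + 5δ
  obtain ⟨p₄, hp₄d, hp₄⟩ := hyperconvex_step h x r hr hd p₃ (s/2 + 5*δ)
    (by positivity) (fun i => if i = a then s/2 else 0)
    (fun i => by by_cases hi : i = a <;> simp [hi] <;> positivity) b
    (fun i hib => by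
      by_cases hia : i = a
      · beta_reduce
        rw [if_pos hia, hia]
        calc dist p₃ (x a) ≤ r a + s + δ := hp₃a
          _ ≤ r a + s/2 + (s/2 + 5*δ) := by linarith
      · beta_reduce
        simp only [if_neg hia]
        by_cases hic : i = c
        · rw [hic]
          calc dist p₃ (x c) ≤ r c + s/2 + 5 * δ := hp₃c
            _ = r c + 0 + (s/2 + 5*δ) := by ring
        · calc dist p₃ (x i) ≤ r i + δ := hp₃rest i hia hic
            _ ≤ r i + 0 + (s/2 + 5*δ) := by linarith) hδ
  have hp₄b : dist p₄ (x b) ≤ r b + s/2 + 7 * δ := by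
    calc dist p₄ (x b) ≤ dist p₄ p₃ + dist p₃ (x b) := dist_triangle _ _ _
      _ ≤ (s/2 + 5*δ + δ) + (r b + δ) := add_le_add hp₄d (hp₃rest b (Ne.symm hab) hbc)
      _ = r b + s/2 + 7 * δ := by ring
  refine ⟨p₄, ?_, ?_⟩
  · have t4 : dist p₄ p ≤ dist p₄ p₃ + dist p₃ p₂ + dist p₂ p₁ + dist p₁ p := by
      have h4 := dist_triangle4 p₄ p₃ p₂ p
      have h3 := dist_triangle p₂ p₁ p
      linarith
    have : dist p₄ p ≤ (s/2 + 5*δ + δ) + (s/2 + 3*δ + δ) + (s/2 + δ + δ) + (s + δ) := by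
      linarith [hp₄d, hp₃d, hp₂d, hp₁d]
    rw [hδdef] at this
    linarith
  · intro i
    by_cases hib : i = b
    · rw [hib]
      calc dist p₄ (x b) ≤ r b + s/2 + 7 * δ := hp₄b
        _ ≤ r b + (3/5) * s := by rw [hδdef]; linarith
    · have := hp₄ i hib
      by_cases hia : i = a
      · rw [if_pos hia] at this
        calc dist p₄ (x i) ≤ r i + s/2 + δ := by linarith
          _ ≤ r i + (3/5) * s := by rw [hδdef]; linarith
      · beta_reduce
        simp only [if_neg hia] at this
        calc dist p₄ (x i) ≤ r i + 0 + δ := this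
          _ ≤ r i + (3/5) * s := by rw [hδdef]; linarith

end Aux

theorem isNHyperconvex_completion (X : Type*) [MetricSpace X] (n : ℕ) (hn : 3 ≤ n)
    (h : IsNHyperconvex X n) : IsNHyperconvex (UniformSpace.Completion X) n := by
  intro x r hr hd
  -- initial point with all slacks ≤ 1
  have h0 : 0 < n := by omega
  set a : Fin n := ⟨0, h0⟩
  obtain ⟨p₀, hp₀d, hp₀'⟩ := hyperconvex_step h x r hr hd (x a) (r a) (hr a)
    (fun _ => 0) (fun _ => le_refl 0) a
    (fun i _ => by
      calc dist (x a) (x i) ≤ r a + r i := hd a i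
        _ = r i + 0 + r a := by ring) one_pos
  have hp₀ : ∀ i, dist p₀ (x i) ≤ r i + 1 := by
    intro i
    by_cases hia : i = a
    · rw [hia]; linarith [hp₀d]
    · have := hp₀' i hia; linarith
  -- the contraction step, at scale (3/5)^k
  have mstep : ∀ (k : ℕ) (p : UniformSpace.Completion X),
      (∀ i, dist p (x i) ≤ r i + (3/5 : ℝ)^k) →
      ∃ q, dist q p ≤ 3 * (3/5 : ℝ)^k ∧ ∀ i, dist q (x i) ≤ r i + (3/5 : ℝ)^(k+1) := by
    intro k p hp
    obtain ⟨q, hq1, hq2⟩ := hyperconvex_contract h hn x r hr hd p ((3/5 : ℝ)^k)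
      (by positivity) hp
    refine ⟨q, hq1, fun i => ?_⟩
    calc dist q (x i) ≤ r i + (3/5) * (3/5 : ℝ)^k := hq2 i
      _ = r i + (3/5 : ℝ)^(k+1) := by rw [pow_succ]; ring
  have : Nonempty (UniformSpace.Completion X) := ⟨x a⟩
  choose! F hF1 hF2 using mstep
  set seq : ℕ → UniformSpace.Completion X :=
    fun k => Nat.rec p₀ (fun k q => F k q) k with hseqdef
  have hseqsucc : ∀ k, seq (k+1) = F k (seq k) := fun k => rfl
  have hinv : ∀ k, ∀ i, dist (seq k) (x i) ≤ r i + (3/5 : ℝ)^k := by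
    intro k
    induction k with
    | zero => intro i; rw [pow_zero]; exact hp₀ i
    | succ k ih => rw [hseqsucc]; exact hF2 k (seq k) ih
  have hmove : ∀ k, dist (seq k) (seq (k+1)) ≤ 3 * (3/5 : ℝ)^k := by
    intro k
    rw [dist_comm, hseqsucc]
    exact hF1 k (seq k) (hinv k)
  have hcauchy : CauchySeq seq := cauchySeq_of_le_geometric (3/5) 3 (by norm_num) hmove
  obtain ⟨q, hq⟩ := cauchySeq_tendsto_of_complete hcauchy
  refine ⟨q, Set.mem_iInter.2 fun i => Metric.mem_closedBall.2 ?_⟩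
  have hlim1 : Tendsto (fun k => dist (seq k) (x i)) atTop (nhds (dist q (x i))) :=
    (hq.dist tendsto_const_nhds)
  have hlim2 : Tendsto (fun k => r i + (3/5 : ℝ)^k) atTop (nhds (r i + 0)) :=
    tendsto_const_nhds.add (tendsto_pow_atTop_nhds_zero_of_lt_one (by norm_num) (by norm_num))
  have := le_of_tendsto_of_tendsto' hlim1 hlim2 (fun k => hinv k i)
  simpa using this
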